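/- For x in the domain of φ, the first component of G(x, φ(x)) equals a00(x-p00)² + a01·(a00·a11(p01-p11))²·((x-p00)/((a00·a11-a01·a10)x + (-a00·a11·p00 + a01·a10·p10)))², and the second component equals a10(x-p10)² + a11·(a01·a10(p01-p11))²·((x-p10)/((a00·a11-a01·a10)x + (-a00·a11·p00 + a01·a10·p10)))². -/

import Mathlib

/-- Explicit formula for `G(x, φ(x))` on the domain of `φ`. -/
theorem G_on_singular_set_formula
    (a00 a01 a10 a11 p00 p01 p10 p11 : ℝ)
    (h00 : a00 ≠ 0) (h01 : a01 ≠ 0) (h10 : a10 ≠ 0) (h11 : a11 ≠ 0)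
    (hdet : a00 * a11 - a01 * a10 ≠ 0) (hp0 : p00 ≠ p10) (hp1 : p01 ≠ p11)
    (φ : ℝ → ℝ)
    (hφ : ∀ x : ℝ, φ x =
      -(((-(a00 * a11 * p11) + a01 * a10 * p01) * x +
          (a00 * a11 * p00 * p11 - a01 * a10 * p01 * p10)) /
        ((a00 * a11 - a01 * a10) * x + (-(a00 * a11 * p00) + a01 * a10 * p10)))) :
    ∀ x : ℝ, (a00 * a11 - a01 * a10) * x + (-(a00 * a11 * p00) + a01 * a10 * p10) ≠ 0 →
      a00 * (x - p00) ^ 2 + a01 * (φ x - p01) ^ 2 =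
        a00 * (x - p00) ^ 2 + a01 * (a00 * a11 * (p01 - p11)) ^ 2 *
          ((x - p00) /
            ((a00 * a11 - a01 * a10) * x + (-(a00 * a11 * p00) + a01 * a10 * p10))) ^ 2 ∧
      a10 * (x - p10) ^ 2 + a11 * (φ x - p11) ^ 2 =
        a10 * (x - p10) ^ 2 + a11 * (a01 * a10 * (p01 - p11)) ^ 2 *
          ((x - p10) /
            ((a00 * a11 - a01 * a10) * x + (-(a00 * a11 * p00) + a01 * a10 * p10))) ^ 2 := by
  intro x hx
  rw [hφ]
  constructor <;> rw [div_pow, neg_div', div_sub' hx, div_pow] <;> field_simp <;> ring
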